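/- arXiv:1106.0950 — 4 statements merged into one kernel-verified Lean document; each statement's English description precedes it below -/
import Mathlib

section
/- Let $A$ be an associative algebra over a field of characteristic $0$ or $> n$ in which $x^n = 0$ for all $x$. Then for all $a, x, y \in A$: $n\, x^{n-1} a\, y^{n-1} = 0$, and hence $x^{n-1} a\, y^{n-1} = 0$. -/
/-- `npow₁ x k = x^(k+1)`, powers in a possibly non-unital multiplicative structure. -/
def npow₁ {A : Type*} [Mul A] (x : A) : ℕ → A
  | 0 => x
  | k + 1 => npow₁ x k * x

open Finset Polynomial

section Aux

variable {F : Type*} [Field F]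

/-- Vandermonde-type extraction: if a polynomial-type combination of vectors vanishes
for all scalars, and casts of `0..n` behave injectively, each vector is zero. -/
theorem vand {n : ℕ} (hc : ∀ m : ℕ, m ≤ n → ((m : F) = 0) → m = 0)
    {V : Type*} [AddCommGroup V] [Module F V] (v : ℕ → V)
    (h : ∀ lam : F, ∑ k ∈ range (n + 1), lam ^ k • v k = 0) :
    ∀ k ∈ range (n + 1), v k = 0 := by
  classical
  have hinj : Set.InjOn (fun m : ℕ => (m : F)) (range (n + 1) : Finset ℕ) := by
    intro i hi j hj hij
    simp only [coe_range, Set.mem_Iio] at hi hj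
    rcases le_total i j with hle | hle
    · have : ((j - i : ℕ) : F) = 0 := by
        push_cast [Nat.cast_sub hle] at hij ⊢
        simp [hij]
      have := hc (j - i) (by omega) this
      omega
    · have : ((i - j : ℕ) : F) = 0 := by
        push_cast [Nat.cast_sub hle] at hij ⊢
        simp [hij]
      have := hc (i - j) (by omega) this
      omega
  intro k hk
  rw [← Module.forall_dual_apply_eq_zero_iff F]
  intro φ
  set P : F[X] := ∑ j ∈ range (n + 1), monomial j (φ (v j)) with hP
  have hdeg : P.natDegree ≤ n := by
    apply natDegree_sum_le_of_forall_le
    intro j hj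
    exact (natDegree_monomial_le _).trans (by simp at hj; omega)
  have heval : ∀ lam : F, P.eval lam = 0 := by
    intro lam
    have := congrArg (φ : V →ₗ[F] F) (h lam)
    simp only [map_sum, map_smul, smul_eq_mul, map_zero] at this
    rw [hP, eval_finset_sum]
    simpa [eval_monomial, mul_comm] using this
  have hP0 : P = 0 := by
    apply eq_zero_of_natDegree_lt_card_of_eval_eq_zero' P ((range (n + 1)).image (Nat.cast : ℕ → F))
    · intro x hx
      exact heval x
    · rw [Finset.card_image_of_injOn hinj, card_range]
      omega
  have : P.coeff k = φ (v k) := by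
    rw [hP, finset_sum_coeff]
    rw [Finset.sum_congr rfl (fun j _ => coeff_monomial (n := j) (m := k))]
    rw [Finset.sum_ite_eq' (range (n + 1)) k (fun j => φ (v j))]
    simp [hk]
  rw [hP0] at this
  simpa using this.symm

variable {B : Type*} [Ring B] [Module F B] [IsScalarTower F B B] [SMulCommClass F B B]

/-- Words of length `m` in `X` and `C` with `k` copies of `C`, summed. -/
noncomputable def W (X C : B) : ℕ → ℕ → B
  | 0, 0 => 1
  | 0, _ + 1 => 0
  | m + 1, 0 => W X C m 0 * X
  | m + 1, k + 1 => W X C m (k + 1) * X + W X C m k * C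

theorem W_top (X C : B) : ∀ m k, m < k → W X C m k = 0 := by
  intro m
  induction m with
  | zero => intro k hk; match k, hk with
            | k + 1, _ => rfl
  | succ m ih =>
    intro k hk
    match k, hk with
    | k + 1, hk =>
      show W X C m (k + 1) * X + W X C m k * C = 0
      rw [ih (k + 1) (by omega), ih k (by omega), zero_mul, zero_mul, add_zero]

theorem W_zero (X C : B) : ∀ m, W X C m 0 = X ^ m := by
  intro m
  induction m with
  | zero => rw [pow_zero]; rfl
  | succ m ih => show W X C m 0 * X = _; rw [ih, pow_succ]

theorem W_one (X C : B) : ∀ m, W X C m 1 = ∑ p ∈ range m, X ^ p * C * X ^ (m - 1 - p) := by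
  intro m
  induction m with
  | zero => simp; rfl
  | succ m ih =>
    show W X C m 1 * X + W X C m 0 * C = _
    rw [ih, W_zero, Finset.sum_range_succ, Finset.sum_mul]
    congr 1
    · apply Finset.sum_congr rfl
      intro p hp
      simp only [mem_range] at hp
      rw [mul_assoc, ← pow_succ]
      congr 2
      omega
    · simp

theorem expand (X C : B) : ∀ (m : ℕ) (lam : F),
    (X + lam • C) ^ m = ∑ k ∈ range (m + 1), lam ^ k • W X C m k := by
  intro m
  induction m with
  | zero => intro lam; simp; rfl
  | succ m ih =>
    intro lam
    rw [pow_succ, ih lam, Finset.sum_mul]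
    have step : ∀ k, lam ^ k • W X C m k * (X + lam • C)
        = lam ^ k • (W X C m k * X) + lam ^ (k + 1) • (W X C m k * C) := by
      intro k
      rw [mul_add, smul_mul_assoc, smul_mul_assoc, mul_smul_comm, smul_smul, ← pow_succ]
    rw [Finset.sum_congr rfl (fun k _ => step k), Finset.sum_add_distrib]
    -- RHS: peel off k = 0
    rw [Finset.sum_range_succ' (fun k => lam ^ k • W X C (m + 1) k) (m + 1)]
    have hW0 : lam ^ 0 • W X C (m + 1) 0 = W X C m 0 * X := by
      simp [W]
    rw [hW0]
    have hWk : ∀ k ∈ range (m + 1), lam ^ (k + 1) • W X C (m + 1) (k + 1)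
        = lam ^ (k + 1) • (W X C m (k + 1) * X) + lam ^ (k + 1) • (W X C m k * C) := by
      intro k _
      show lam ^ (k + 1) • (W X C m (k + 1) * X + W X C m k * C) = _
      rw [smul_add]
    rw [Finset.sum_congr rfl hWk, Finset.sum_add_distrib]
    -- first sums: shift index
    have lhs1 : ∑ k ∈ range (m + 1), lam ^ k • (W X C m k * X)
        = (∑ k ∈ range (m + 1), lam ^ (k + 1) • (W X C m (k + 1) * X)) + W X C m 0 * X := by
      rw [Finset.sum_range_succ (fun k => lam ^ (k + 1) • (W X C m (k + 1) * X)) m]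
      rw [W_top X C m (m + 1) (by omega)]
      rw [Finset.sum_range_succ' (fun k => lam ^ k • (W X C m k * X)) m]
      simp
    rw [lhs1]
    abel

/-- The full linearization `L Z C = ∑_{p+q=n-1} Z^p C Z^q`. -/
noncomputable def Lin (n : ℕ) (Z C : B) : B := ∑ p ∈ range n, Z ^ p * C * Z ^ (n - 1 - p)

theorem lin_eq_zero {n : ℕ} (hn : 1 ≤ n) (hc : ∀ m : ℕ, m ≤ n → ((m : F) = 0) → m = 0)
    (X C : B) (h : ∀ lam : F, (X + lam • C) ^ n = 0) : Lin n X C = 0 := by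
  have hv := vand hc (W X C n) (fun lam => by rw [← expand X C n lam]; exact h lam)
  have h1 := hv 1 (by simp; omega)
  rw [W_one] at h1
  exact h1

theorem rearr {n : ℕ} (hn : 1 ≤ n) (X Y Aa : B) :
    ∑ i ∈ range n, Lin n X (Aa * Y ^ i) * Y ^ (n - 1 - i)
      = n • (X ^ (n - 1) * Aa * Y ^ (n - 1))
        + ∑ p ∈ range (n - 1), X ^ p * Aa * Lin n Y (X ^ (n - 1 - p)) := by
  have expand1 : ∀ i ∈ range n, Lin n X (Aa * Y ^ i) * Y ^ (n - 1 - i)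
      = ∑ p ∈ range n, X ^ p * (Aa * Y ^ i) * X ^ (n - 1 - p) * Y ^ (n - 1 - i) := by
    intro i _
    rw [Lin, Finset.sum_mul]
  rw [Finset.sum_congr rfl expand1, Finset.sum_comm]
  obtain ⟨m, rfl⟩ : ∃ m, n = m + 1 := ⟨n - 1, by omega⟩
  simp only [Nat.add_sub_cancel]
  rw [Finset.sum_range_succ]
  have hlast : ∑ i ∈ range (m + 1), X ^ m * (Aa * Y ^ i) * X ^ (m - m) * Y ^ (m - i)
      = (m + 1) • (X ^ m * Aa * Y ^ m) := by
    have h : ∀ i ∈ range (m + 1), X ^ m * (Aa * Y ^ i) * X ^ (m - m) * Y ^ (m - i)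
        = X ^ m * Aa * Y ^ m := by
      intro i hi
      simp only [mem_range] at hi
      rw [Nat.sub_self, pow_zero, mul_one, mul_assoc (X ^ m), mul_assoc Aa, ← pow_add,
        (by omega : i + (m - i) = m), ← mul_assoc]
    rw [Finset.sum_congr rfl h, Finset.sum_const, card_range]
  rw [hlast, add_comm]
  congr 1
  apply Finset.sum_congr rfl
  intro p hp
  simp only [mem_range] at hp
  rw [Lin, Finset.mul_sum]
  apply Finset.sum_congr rfl
  intro i _
  simp only [show (1 + m - 1 : ℕ) = m from by omega, Nat.add_sub_cancel]
  simp [mul_assoc]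

end Aux

/-- In a (not necessarily unital) associative algebra over a field of characteristic
`0` or `> n` satisfying `x^n = 0` for all `x`, we have `n • (x^(n-1) a y^(n-1)) = 0`
and hence `x^(n-1) a y^(n-1) = 0`. -/
theorem stmt_13 (F : Type*) [Field F] (n : ℕ) (hn : 2 ≤ n)
    (hchar : ringChar F = 0 ∨ n < ringChar F)
    (A : Type*) [NonUnitalRing A] [Module F A] [IsScalarTower F A A] [SMulCommClass F A A]
    (hnil : ∀ x : A, npow₁ x (n - 1) = 0) (a x y : A) :
    n • (npow₁ x (n - 2) * a * npow₁ y (n - 2)) = 0 ∧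
    npow₁ x (n - 2) * a * npow₁ y (n - 2) = 0 := by
  have hc : ∀ m : ℕ, m ≤ n → ((m : F) = 0) → m = 0 := by
    intro m hm h0
    have hp := ringChar.charP F
    rw [CharP.cast_eq_zero_iff F (ringChar F) m] at h0
    rcases hchar with h | h
    · rw [h] at h0; exact Nat.eq_zero_of_zero_dvd h0
    · by_contra hne
      have := Nat.le_of_dvd (Nat.pos_of_ne_zero hne) h0
      omega
  have hιpow : ∀ (z : A) (k : ℕ),
      (Unitization.inr (npow₁ z k) : Unitization F A) = (Unitization.inr z : Unitization F A) ^ (k + 1) := by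
    intro z k
    induction k with
    | zero => simp [npow₁]
    | succ k ih => rw [npow₁, Unitization.inr_mul, ih, ← pow_succ]
  have hnilB : ∀ z : A, (Unitization.inr z : Unitization F A) ^ n = 0 := by
    intro z
    have h := congrArg (Unitization.inr : A → Unitization F A) (hnil z)
    rw [hιpow, (by omega : n - 1 + 1 = n)] at h
    simpa using h
  have hL : ∀ (u c : A),
      Lin n (Unitization.inr u : Unitization F A) (Unitization.inr c) = 0 := by
    intro u c
    apply lin_eq_zero (by omega : 1 ≤ n) hc
    intro lam
    rw [show (Unitization.inr u : Unitization F A) + lam • Unitization.inr c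
        = Unitization.inr (u + lam • c) by rw [Unitization.inr_add, Unitization.inr_smul]]
    exact hnilB _
  have key := rearr (n := n) (by omega)
    (Unitization.inr x : Unitization F A) (Unitization.inr y) (Unitization.inr a)
  have hLHS : ∀ i ∈ range n,
      Lin n (Unitization.inr x : Unitization F A) (Unitization.inr a * Unitization.inr y ^ i)
        * Unitization.inr y ^ (n - 1 - i) = 0 := by
    intro i _
    match i with
    | 0 => rw [pow_zero, mul_one, hL x a, zero_mul]
    | j + 1 =>
      rw [show (Unitization.inr a : Unitization F A) * Unitization.inr y ^ (j + 1)
          = Unitization.inr (a * npow₁ y j) by rw [Unitization.inr_mul, hιpow]]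
      rw [hL, zero_mul]
  have hRHS2 : ∀ p ∈ range (n - 1),
      (Unitization.inr x : Unitization F A) ^ p * Unitization.inr a
        * Lin n (Unitization.inr y : Unitization F A) (Unitization.inr x ^ (n - 1 - p)) = 0 := by
    intro p hp
    simp only [mem_range] at hp
    rw [show (Unitization.inr x : Unitization F A) ^ (n - 1 - p)
        = Unitization.inr (npow₁ x (n - 2 - p)) by rw [hιpow]; congr 1; omega]
    rw [hL, mul_zero]
  rw [Finset.sum_congr rfl hLHS, Finset.sum_congr rfl hRHS2] at key
  simp only [Finset.sum_const_zero, zero_add, add_zero] at key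
  replace key := key.symm
  have hprod : (Unitization.inr x : Unitization F A) ^ (n - 1) * Unitization.inr a
      * Unitization.inr y ^ (n - 1)
      = Unitization.inr (npow₁ x (n - 2) * a * npow₁ y (n - 2)) := by
    rw [(by omega : n - 1 = (n - 2) + 1), ← hιpow, ← hιpow,
      Unitization.inr_mul, Unitization.inr_mul]
  rw [hprod] at key
  set v : A := npow₁ x (n - 2) * a * npow₁ y (n - 2) with hv
  have hsmul : (Unitization.inr (n • v) : Unitization F A) = n • Unitization.inr v := by
    rw [← Nat.cast_smul_eq_nsmul F n v, Unitization.inr_smul, Nat.cast_smul_eq_nsmul]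
  have h1 : n • v = 0 := by
    apply Unitization.inr_injective (R := F)
    rw [hsmul, key, Unitization.inr_zero]
  refine ⟨h1, ?_⟩
  have hnF : (n : F) ≠ 0 := fun h0 => by have := hc n le_rfl h0; omega
  have h2 : (n : F) • v = 0 := by rw [Nat.cast_smul_eq_nsmul F n v]; exact h1
  rcases smul_eq_zero.mp h2 with h | h
  · exact absurd h hnF
  · exact h
end

section
/- Let $A$ be an associative algebra over a field of characteristic $\neq 2, 3$ in which $x^4 = 0$ for all $x$. Then for all $a, b \in A$: $a^3 b a^3 = 0$. -/
/-- In a (not necessarily unital) associative algebra over a field of characteristic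
`≠ 2, 3` in which `x⁴ = 0` for all `x`, we have `a³ b a³ = 0` for all `a, b`. -/
theorem stmt_16 (F : Type*) [Field F] (h2 : (2 : F) ≠ 0) (h3 : (3 : F) ≠ 0)
    (A : Type*) [NonUnitalRing A] [Module F A] [IsScalarTower F A A] [SMulCommClass F A A]
    (h4 : ∀ x : A, x * x * x * x = 0) (a b : A) :
    a * a * a * b * a * a * a = 0 := by
  -- step 1: `S3 + S1 = 0` (linearization of `x⁴ = 0` via `(x+y)⁴ - (x-y)⁴`)
  have half : ∀ x y : A,
      (x*x*x*y + x*x*y*x + x*y*x*x + y*x*x*x) + (x*y*y*y + y*x*y*y + y*y*x*y + y*y*y*x) = 0 := by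
    intro x y
    have key : (x+y)*(x+y)*(x+y)*(x+y) - (x-y)*(x-y)*(x-y)*(x-y) =
        ((x*x*x*y + x*x*y*x + x*y*x*x + y*x*x*x) + (x*y*y*y + y*x*y*y + y*y*x*y + y*y*y*x)) +
        ((x*x*x*y + x*x*y*x + x*y*x*x + y*x*x*x) + (x*y*y*y + y*x*y*y + y*y*x*y + y*y*y*x)) := by
      simp only [mul_add, add_mul, mul_sub, sub_mul, ← mul_assoc]
      abel
    have hzz : ((x*x*x*y + x*x*y*x + x*y*x*x + y*x*x*x) + (x*y*y*y + y*x*y*y + y*y*x*y + y*y*y*x)) +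
        ((x*x*x*y + x*x*y*x + x*y*x*x + y*x*x*x) + (x*y*y*y + y*x*y*y + y*y*x*y + y*y*y*x)) = 0 := by
      rw [← key, h4 (x+y), h4 (x-y), sub_zero]
    have h2s : (2:F) • ((x*x*x*y + x*x*y*x + x*y*x*x + y*x*x*x) + (x*y*y*y + y*x*y*y + y*y*x*y + y*y*y*x)) = 0 := by
      rw [two_smul]; exact hzz
    calc (x*x*x*y + x*x*y*x + x*y*x*x + y*x*x*x) + (x*y*y*y + y*x*y*y + y*y*x*y + y*y*y*x)
        = (2:F)⁻¹ • ((2:F) • ((x*x*x*y + x*x*y*x + x*y*x*x + y*x*x*x) + (x*y*y*y + y*x*y*y + y*y*x*y + y*y*y*x))) := by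
          rw [smul_smul, inv_mul_cancel₀ h2, one_smul]
      _ = 0 := by rw [h2s, smul_zero]
  -- step 2: `S1 = 0` (substitute `y ↦ 2y` and use char ≠ 2, 3)
  have s1 : ∀ x y : A, x*y*y*y + y*x*y*y + y*y*x*y + y*y*y*x = 0 := by
    intro x y
    have hA := half x y
    have hB := half x (y+y)
    have e : (x*x*x*(y+y) + x*x*(y+y)*x + x*(y+y)*x*x + (y+y)*x*x*x) +
        (x*(y+y)*(y+y)*(y+y) + (y+y)*x*(y+y)*(y+y) + (y+y)*(y+y)*x*(y+y) + (y+y)*(y+y)*(y+y)*x) =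
        ((x*x*x*y + x*x*y*x + x*y*x*x + y*x*x*x) + (x*y*y*y + y*x*y*y + y*y*x*y + y*y*y*x)) +
        ((x*x*x*y + x*x*y*x + x*y*x*x + y*x*x*x) + (x*y*y*y + y*x*y*y + y*y*x*y + y*y*y*x)) +
        ((x*y*y*y + y*x*y*y + y*y*x*y + y*y*y*x) + (x*y*y*y + y*x*y*y + y*y*x*y + y*y*y*x) +
         (x*y*y*y + y*x*y*y + y*y*x*y + y*y*y*x) + (x*y*y*y + y*x*y*y + y*y*x*y + y*y*y*x) +
         (x*y*y*y + y*x*y*y + y*y*x*y + y*y*y*x) + (x*y*y*y + y*x*y*y + y*y*x*y + y*y*y*x)) := by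
      simp only [mul_add, add_mul, ← mul_assoc]
      abel
    rw [e, hA] at hB
    simp only [zero_add, add_zero] at hB
    have h6s : (6:F) • (x*y*y*y + y*x*y*y + y*y*x*y + y*y*y*x) = 0 := by
      rw [show (6:F) = 1+1+1+1+1+1 by norm_num]
      simp only [add_smul, one_smul]
      calc _ = (x*y*y*y + y*x*y*y + y*y*x*y + y*y*y*x) + (x*y*y*y + y*x*y*y + y*y*x*y + y*y*y*x) +
         (x*y*y*y + y*x*y*y + y*y*x*y + y*y*y*x) + (x*y*y*y + y*x*y*y + y*y*x*y + y*y*y*x) +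
         (x*y*y*y + y*x*y*y + y*y*x*y + y*y*y*x) + (x*y*y*y + y*x*y*y + y*y*x*y + y*y*y*x) := by abel
        _ = 0 := hB
    have h6 : (6:F) ≠ 0 := by
      have : (6:F) = 2*3 := by norm_num
      rw [this]; exact mul_ne_zero h2 h3
    calc x*y*y*y + y*x*y*y + y*y*x*y + y*y*y*x
        = (6:F)⁻¹ • ((6:F) • (x*y*y*y + y*x*y*y + y*y*x*y + y*y*y*x)) := by
          rw [smul_smul, inv_mul_cancel₀ h6, one_smul]
      _ = 0 := by rw [h6s, smul_zero]
  -- step 3: `S3 = 0`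
  have s3 : a*a*a*b + a*a*b*a + a*b*a*a + b*a*a*a = 0 := by
    have := half a b
    rw [s1 a b, add_zero] at this
    exact this
  -- step 4: multiply by `a` on the left three times, using `a⁴ = 0`
  have e1 : a*a*a*b*a + a*a*b*a*a + a*b*a*a*a = 0 := by
    have := congrArg (fun t => a * t) s3
    simp only [mul_add, ← mul_assoc, mul_zero, h4 a, zero_mul, zero_add] at this
    exact this
  have e2 : a*a*a*b*a*a + a*a*b*a*a*a = 0 := by
    have := congrArg (fun t => a * t) e1
    simp only [mul_add, ← mul_assoc, mul_zero, h4 a, zero_mul, zero_add] at this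
    exact this
  have e3 := congrArg (fun t => a * t) e2
  simp only [mul_add, ← mul_assoc, mul_zero, h4 a, zero_mul, zero_add, add_zero] at e3
  exact e3
end

section
/- In the relatively free algebra $N_{4,d}$ with identity $x^4=0$ over an infinite field of characteristic $\neq 2$, for a letter $x$ and words $a,b$ not beginning or ending with $x$: $x^3 a x b x^2 = -x^3 a x^2 b x$ and $x a x^3 b x^2 = x^3 a x^2 b x$. -/
/-- Cancel a factor of 2 in a module over a field of characteristic `≠ 2`. -/
theorem stmt_17_half (F : Type*) [Field F] (h2 : (2 : F) ≠ 0)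
    (A : Type*) [AddCommGroup A] [Module F A] (z : A) (h : z + z = 0) : z = 0 := by
  have h1 : (2 : F) • z = 0 := by rw [two_smul]; exact h
  calc z = ((2 : F)⁻¹ * 2) • z := by rw [inv_mul_cancel₀ h2, one_smul]
    _ = (2 : F)⁻¹ • ((2 : F) • z) := by rw [mul_smul]
    _ = 0 := by rw [h1, smul_zero]

/-- Partial linearization `T₃₁(x,y) = y x³ + x y x² + x² y x + x³ y = 0` of `z⁴ = 0`. -/
theorem stmt_17_P1 (F : Type*) [Field F] [Infinite F] (h2 : (2 : F) ≠ 0)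
    (A : Type*) [NonUnitalRing A] [Module F A] [IsScalarTower F A A] [SMulCommClass F A A]
    (h4 : ∀ z : A, z * z * z * z = 0) (x y : A) :
    y*x*x*x + x*y*x*x + x*x*y*x + x*x*x*y = 0 := by
  set S1 : A := y*x*x*x + x*y*x*x + x*x*y*x + x*x*x*y with hS1
  set S2 : A := y*y*x*x + y*x*y*x + y*x*x*y + x*y*y*x + x*y*x*y + x*x*y*y with hS2
  set S3 : A := x*y*y*y + y*x*y*y + y*y*x*y + y*y*y*x with hS3
  have hA : S1 + S2 + S3 = 0 := by
    have e := h4 (x + y)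
    have hx := h4 x
    have hy := h4 y
    have key : S1 + S2 + S3
        = (x + y) * (x + y) * (x + y) * (x + y) - x*x*x*x - y*y*y*y := by
      rw [hS1, hS2, hS3]; noncomm_ring
    rw [key, e, hx, hy]; simp
  have hB : S2 - S1 - S3 = 0 := by
    have e := h4 (x - y)
    have hx := h4 x
    have hy := h4 y
    have key : S2 - S1 - S3
        = (x - y) * (x - y) * (x - y) * (x - y) - x*x*x*x - y*y*y*y := by
      rw [hS1, hS2, hS3]; noncomm_ring
    rw [key, e, hx, hy]; simp
  have hP2 : S2 = 0 := by
    refine stmt_17_half F h2 A S2 ?_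
    calc S2 + S2 = (S1 + S2 + S3) + (S2 - S1 - S3) := by abel
      _ = 0 := by rw [hA, hB, add_zero]
  have hP3 : S3 = -S1 := by
    have h13 : S1 + S3 = 0 := by
      calc S1 + S3 = (S1 + S2 + S3) - S2 := by abel
        _ = 0 := by rw [hA, hP2, sub_zero]
    exact eq_neg_of_add_eq_zero_right h13
  classical
  obtain ⟨t, ht⟩ := Infinite.exists_notMem_finset ({0, 1, -1} : Finset F)
  simp only [Finset.mem_insert, Finset.mem_singleton, not_or] at ht
  obtain ⟨ht0, ht1, htm1⟩ := ht
  have hts : t - t*t*t ≠ 0 := by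
    have hfac : t - t*t*t = t * (1 - t) * (1 + t) := by ring
    rw [hfac]
    refine mul_ne_zero (mul_ne_zero ht0 ?_) ?_
    · exact sub_ne_zero.2 fun h => ht1 h.symm
    · intro h
      exact htm1 (eq_neg_of_add_eq_zero_right h)
  have e := h4 (x + t • y)
  have expand : (x + t • y) * (x + t • y) * (x + t • y) * (x + t • y)
      = x*x*x*x + t • S1 + (t*t) • S2 + (t*t*t) • S3 + (t*t*t*t) • (y*y*y*y) := by
    rw [hS1, hS2, hS3]
    simp only [mul_add, add_mul, smul_mul_assoc, mul_smul_comm, smul_smul, smul_add]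
    module
  rw [e, h4 x, h4 y, hP2, hP3] at expand
  simp only [smul_zero, smul_neg, add_zero, zero_add] at expand
  have hz : (t - t*t*t) • S1 = 0 := by
    rw [sub_smul, sub_eq_add_neg]
    exact expand.symm
  calc S1 = (t - t*t*t)⁻¹ • ((t - t*t*t) • S1) := (inv_smul_smul₀ hts S1).symm
    _ = 0 := by rw [hz, smul_zero]

/-- In any (not necessarily unital) associative algebra over an infinite field of
characteristic `≠ 2` satisfying the identity `z⁴ = 0` — in particular in the relatively
free algebra `N_{4,d}` — for all elements `x, a, b`:
`x³ a x b x² = -x³ a x² b x` and `x a x³ b x² = x³ a x² b x`. -/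
theorem stmt_17 (F : Type*) [Field F] [Infinite F] (h2 : (2 : F) ≠ 0)
    (A : Type*) [NonUnitalRing A] [Module F A] [IsScalarTower F A A] [SMulCommClass F A A]
    (h4 : ∀ z : A, z * z * z * z = 0) (x a b : A) :
    x * x * x * a * x * b * x * x = -(x * x * x * a * x * x * b * x) ∧
    x * a * x * x * x * b * x * x = x * x * x * a * x * x * b * x := by
  have hP1 := stmt_17_P1 F h2 A h4
  constructor
  · have key : x * x * x * a * x * b * x * x + x * x * x * a * x * x * b * x
        = -a*(x*x*x*x)*b*x*x - a*(x*x*x*x)*x*b*x + a*b*(x*x*x*x)*x*x + a*b*(x*x*x*x)*x*x - x*a*(x*x*x*x)*b*x + a*x*b*(x*x*x*x)*x + x*a*b*(x*x*x*x)*x + x*a*b*(x*x*x*x)*x + a*x*x*b*(x*x*x*x) + x*a*x*b*(x*x*x*x) + x*x*a*b*(x*x*x*x) + x*x*a*b*(x*x*x*x) - a*(b*x*x*x + x*b*x*x + x*x*b*x + x*x*x*b)*x*x*x - x*a*(b*x*x*x + x*b*x*x + x*x*b*x + x*x*x*b)*x*x - x*x*a*(b*x*x*x + x*b*x*x + x*x*b*x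 + x*x*x*b)*x + (a*x*x*x + x*a*x*x + x*x*a*x + x*x*x*a)*b*x*x*x + (a*x*x*x + x*a*x*x + x*x*a*x + x*x*x*a)*x*b*x*x + (a*x*x*x + x*a*x*x + x*x*a*x + x*x*x*a)*x*x*b*x - ((a*b)*x*x*x + x*(a*b)*x*x + x*x*(a*b)*x + x*x*x*(a*b))*x*x*x := by
      noncomm_ring
    rw [h4 x, hP1 x b, hP1 x a, hP1 x (a*b)] at key
    simp only [mul_zero, zero_mul, add_zero, zero_add, neg_zero, sub_zero, zero_sub,
      neg_neg, add_neg_cancel, neg_add_cancel] at key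
    -- key : LHS + RHS' = 0 (hopefully)
    exact eq_neg_of_add_eq_zero_left key
  · have key : x * a * x * x * x * b * x * x - x * x * x * a * x * x * b * x
        = a*(x*x*x*x)*b*x*x + a*(x*x*x*x)*x*b*x - a*b*(x*x*x*x)*x*x - a*b*(x*x*x*x)*x*x - a*b*(x*x*x*x)*x*x - a*b*(x*x*x*x)*x*x + x*a*(x*x*x*x)*b*x - a*x*b*(x*x*x*x)*x - a*x*b*(x*x*x*x)*x - a*x*b*(x*x*x*x)*x - x*a*b*(x*x*x*x)*x - x*a*b*(x*x*x*x)*x - x*a*b*(x*x*x*x)*x - x*a*b*(x*x*x*x)*x - a*x*x*b*(x*x*x*x) - a*x*x*b*(x*x*x*x) - x*a*x*b*(x*x*x*x) - x*a*x*b*(x*x*x*x) - x*a*x*b*(x*x*x*x) - x*x*a*b*(x*x*x*x) - x*x*a*b*(x*x*x*x) - x*x*a*b*(x*x*x*x) + a*(b*x*x*x + x*b*x*x + x*x*b*x + x*x*x*b)*x*x*x + a*(b*x*x*x + x*b*x*x + x*x*b*x + x*x*x*b)*x*x*x + x*a*(b*x*x*x + x*b*x*x + x*x*b*x + x*x*x*b)*x*x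 + x*a*(b*x*x*x + x*b*x*x + x*x*b*x + x*x*x*b)*x*x + x*x*a*(b*x*x*x + x*b*x*x + x*x*b*x + x*x*x*b)*x - (a*x*x*x + x*a*x*x + x*x*a*x + x*x*x*a)*b*x*x*x - (a*x*x*x + x*a*x*x + x*x*a*x + x*x*x*a)*b*x*x*x - (a*x*x*x + x*a*x*x + x*x*a*x + x*x*x*a)*x*b*x*x - (a*x*x*x + x*a*x*x + x*x*a*x + x*x*x*a)*x*x*b*x + ((a*b)*x*x*x + x*(a*b)*x*x + x*x*(a*b)*x + x*x*x*(a*b))*x*x*x + ((a*b)*x*x*x + x*(a*b)*x*x + x*x*(a*b)*x + x*x*x*(a*b))*x*x*x + ((a*x*b)*x*x*x + x*(a*x*b)*x*x + x*x*(a*x*b)*x + x*x*x*(a*x*b))*x*x := by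
      noncomm_ring
    rw [h4 x, hP1 x b, hP1 x a, hP1 x (a*b), hP1 x (a*x*b)] at key
    simp only [mul_zero, zero_mul, add_zero, zero_add, neg_zero, sub_zero, zero_sub,
      neg_neg, add_neg_cancel, neg_add_cancel] at key
    exact sub_eq_zero.mp key
end

section
/- Over an infinite field of characteristic $2$, the nilpotency degree of the relatively free $d$-generated algebra with identity $x^4 = 0$ satisfies $C_{4,d} > 3d$; more precisely, the word $x_1^3 x_2^3 \cdots x_d^3$ is nonzero in $N_{4,d}$. -/
/-- The augmentation (constant-term) homomorphism of the free algebra. -/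
noncomputable def aug (F : Type*) [CommRing F] (X : Type*) :
    FreeAlgebra F X →ₐ[F] F :=
  FreeAlgebra.lift F (fun _ : X => (0 : F))

/-- The relation whose ring quotient of the free algebra on `d` generators is the
(unitization of the) relatively free algebra `N_{4,d}` with identity `x⁴ = 0`:
fourth powers of all elements with zero constant term are set to zero. -/
def relN4 (F : Type*) [CommRing F] (d : ℕ) :
    FreeAlgebra F (Fin d) → FreeAlgebra F (Fin d) → Prop :=
  fun a b => b = 0 ∧ ∃ f : FreeAlgebra F (Fin d), aug F (Fin d) f = 0 ∧ a = f ^ 4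

/-- Over an infinite field of characteristic `2`, the word `x₁³ x₂³ ⋯ x_d³` is nonzero
in `N_{4,d}`; in particular the nilpotency degree satisfies `C_{4,d} > 3d`. -/
theorem stmt_18 (F : Type*) [Field F] [Infinite F] (h2 : ringChar F = 2)
    (d : ℕ) (hd : 1 ≤ d) :
    RingQuot.mkAlgHom F (relN4 F d)
      ((List.ofFn fun i : Fin d => FreeAlgebra.ι F i ^ 3).prod) ≠ 0 := by
  classical
  have hchar : CharP F 2 := h2 ▸ ringChar.charP F
  haveI : Fact (Nat.Prime 2) := ⟨Nat.prime_two⟩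
  set R := MvPolynomial (Fin d) F with hR
  haveI : CharP R 2 := inferInstanceAs (CharP (MvPolynomial (Fin d) F) 2)
  set I : Ideal R := Ideal.span (Set.range fun i : Fin d => MvPolynomial.X i ^ 4) with hI
  -- the algebra map to the quotient
  let π : R →ₐ[F] R ⧸ I := Ideal.Quotient.mkₐ F I
  let φ : FreeAlgebra F (Fin d) →ₐ[F] R ⧸ I :=
    FreeAlgebra.lift F (fun i => π (MvPolynomial.X i))
  -- augmentation on the quotient
  have hIaug : ∀ a : R, a ∈ I → MvPolynomial.aeval (0 : Fin d → F) a = 0 := by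
    intro a ha
    have hle : I ≤ RingHom.ker (MvPolynomial.aeval (0 : Fin d → F) : R →ₐ[F] F).toRingHom := by
      rw [hI, Ideal.span_le]
      rintro x ⟨i, rfl⟩
      have h0 : (MvPolynomial.aeval (0 : Fin d → F)) (MvPolynomial.X i ^ 4 : R) = 0 := by
        rw [map_pow, MvPolynomial.aeval_X, Pi.zero_apply]
        exact zero_pow (by decide)
      rw [SetLike.mem_coe, RingHom.mem_ker]
      exact h0
    exact hle ha
  let ε : R ⧸ I →ₐ[F] F :=
    Ideal.Quotient.liftₐ I (MvPolynomial.aeval (0 : Fin d → F)) hIaug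
  have hεπ : ∀ q : R, ε (π q) = MvPolynomial.aeval (0 : Fin d → F) q := by
    intro q
    show Ideal.Quotient.liftₐ I _ hIaug (Ideal.Quotient.mkₐ F I q) = _
    rw [Ideal.Quotient.liftₐ_apply, Ideal.Quotient.mkₐ_eq_mk]
    exact Ideal.Quotient.lift_mk I _ _
  have hεφ : ∀ f, ε (φ f) = aug F (Fin d) f := by
    intro f
    have : ε.comp φ = aug F (Fin d) := by
      apply FreeAlgebra.hom_ext
      funext i
      show ε (φ (FreeAlgebra.ι F i)) = aug F (Fin d) (FreeAlgebra.ι F i)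
      rw [show φ (FreeAlgebra.ι F i) = π (MvPolynomial.X i) from
        FreeAlgebra.lift_ι_apply _ _, hεπ, MvPolynomial.aeval_X, Pi.zero_apply]
      rw [show aug F (Fin d) (FreeAlgebra.ι F i) = 0 from FreeAlgebra.lift_ι_apply _ _]
    exact congrFun (congrArg (fun g : _ →ₐ[F] F => (g : FreeAlgebra F (Fin d) → F)) this) f
  -- key: fourth powers of augmentation-zero elements die
  have key : ∀ f : FreeAlgebra F (Fin d), aug F (Fin d) f = 0 → (φ f) ^ 4 = 0 := by
    intro f hf
    obtain ⟨p, hp⟩ := Ideal.Quotient.mk_surjective (I := I) (φ f)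
    have hπp : π p = φ f := hp
    have hc : MvPolynomial.constantCoeff p = 0 := by
      have := hεφ f
      rw [← hπp] at this
      rw [hεπ p] at this
      rw [hf] at this
      rwa [MvPolynomial.aeval_zero, Algebra.algebraMap_self_apply] at this
    -- p lies in the ideal generated by the variables
    have hp0 : p ∈ Ideal.span (Set.range (MvPolynomial.X : Fin d → R)) := by
      rw [← Set.image_univ, MvPolynomial.mem_ideal_span_X_image]
      intro m hm
      have hm0 : m ≠ 0 := by
        rintro rfl
        rw [MvPolynomial.mem_support_iff] at hm
        exact hm (by simpa [MvPolynomial.constantCoeff_eq] using hc)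
      obtain ⟨i, hi⟩ := Finsupp.ne_iff.mp hm0
      exact ⟨i, Set.mem_univ i, by simpa using hi⟩
    -- Frobenius squared
    let Frob2 : R →+* R := (frobenius R 2).comp (frobenius R 2)
    have hfrob : ∀ q : R, Frob2 q = q ^ 4 := by
      intro q
      show (q ^ 2) ^ 2 = q ^ 4
      ring
    have hp4 : p ^ 4 ∈ I := by
      have h1 : Frob2 p ∈ Ideal.map Frob2 (Ideal.span (Set.range (MvPolynomial.X : Fin d → R))) :=
        Ideal.mem_map_of_mem _ hp0
      rw [Ideal.map_span] at h1
      rw [hfrob] at h1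
      refine Ideal.span_le.mpr ?_ h1
      rintro x ⟨y, ⟨i, rfl⟩, rfl⟩
      have : Frob2 (MvPolynomial.X i) = MvPolynomial.X i ^ 4 := hfrob _
      rw [this]
      exact Ideal.subset_span ⟨i, rfl⟩
    calc (φ f) ^ 4 = π (p ^ 4) := by rw [← hπp, map_pow]
    _ = 0 := by
      rwa [show (π (p^4) : R ⧸ I) = Ideal.Quotient.mk I (p^4) from rfl,
        Ideal.Quotient.eq_zero_iff_mem]
  -- lift through the RingQuot
  have hrel : ∀ ⦃a b⦄, relN4 F d a b → φ a = φ b := by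
    rintro a b ⟨rfl, f, hf, rfl⟩
    rw [map_pow, map_zero]
    exact key f hf
  intro hzero
  have := congrArg (RingQuot.liftAlgHom F ⟨φ, hrel⟩) hzero
  rw [RingQuot.liftAlgHom_mkAlgHom_apply, map_zero] at this
  -- compute φ of the word
  rw [map_list_prod] at this
  have hmap : (List.ofFn fun i : Fin d => FreeAlgebra.ι F i ^ 3).map φ
      = List.ofFn fun i : Fin d => π (MvPolynomial.X i ^ 3) := by
    rw [List.map_ofFn]
    congr 1
    funext i
    simp [φ, π, Function.comp]
  rw [hmap] at this
  have hπl : (List.ofFn fun i : Fin d => π (MvPolynomial.X i ^ 3)).prod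
      = π ((List.ofFn fun i : Fin d => (MvPolynomial.X i : R) ^ 3).prod) := by
    rw [map_list_prod, List.map_ofFn]
    rfl
  rw [hπl] at this
  have hmem : ((List.ofFn fun i : Fin d => (MvPolynomial.X i : R) ^ 3).prod) ∈ I := by
    rwa [show (π _ : R ⧸ I) = Ideal.Quotient.mk I _ from rfl,
      Ideal.Quotient.eq_zero_iff_mem] at this
  -- but this monomial is not in I
  set t : Fin d →₀ ℕ := Finsupp.equivFunOnFinite.symm (fun _ => 3) with ht
  have htapp : ∀ i, t i = 3 := fun i => rfl
  have htsupp : t.support = Finset.univ := by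
    ext i; simp [Finsupp.mem_support_iff, htapp]
  have hprod : (List.ofFn fun i : Fin d => (MvPolynomial.X i : R) ^ 3).prod
      = MvPolynomial.monomial t 1 := by
    rw [List.prod_ofFn]
    rw [← MvPolynomial.prod_X_pow_eq_monomial, htsupp]
    apply Finset.prod_congr rfl
    intro i _
    rw [htapp]
  rw [hprod] at hmem
  have hIeq : I = Ideal.span ((fun s => MvPolynomial.monomial s (1 : F)) ''
      (Set.range fun i : Fin d => Finsupp.single i 4)) := by
    rw [hI]
    congr 1
    ext x
    constructor
    · rintro ⟨i, rfl⟩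
      exact ⟨Finsupp.single i 4, ⟨i, rfl⟩, MvPolynomial.X_pow_eq_monomial.symm⟩
    · rintro ⟨s, ⟨i, rfl⟩, rfl⟩
      exact ⟨i, MvPolynomial.X_pow_eq_monomial⟩
  rw [hIeq, MvPolynomial.mem_ideal_span_monomial_image] at hmem
  have hmemt : t ∈ (MvPolynomial.monomial t (1 : F)).support := by
    rw [MvPolynomial.mem_support_iff, MvPolynomial.coeff_monomial, if_pos rfl]
    exact one_ne_zero
  obtain ⟨si, ⟨i, rfl⟩, hle⟩ := hmem t hmemt
  have := hle i
  simp [htapp] at this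
end
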